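/- arXiv:2602.18938 — 2 statements merged into one kernel-verified Lean document; each statement's English description precedes it below -/
import Mathlib

section
/- Let ε > 1, ς > 0, α > 0, and τ^FE = ε·(1+ς)·(1+α)/(ς·(ε + α·(ε-1))). Then τ^FE lies strictly between the welfare-optimal tariff factor τ*_W = 1 + 1/ς and the Laffer-peak tariff factor τ*_L = 1 + (ς + ε)/(ς·(ε - 1)). -/
theorem fiscally_optimal_tariff_between (ε ς α : ℝ) (hε : 1 < ε) (hς : 0 < ς) (hα : 0 < α) :
    1 + 1 / ς < ε * (1 + ς) * (1 + α) / (ς * (ε + α * (ε - 1))) ∧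
    ε * (1 + ς) * (1 + α) / (ς * (ε + α * (ε - 1))) < 1 + (ς + ε) / (ς * (ε - 1)) := by
  have hd : 0 < ς * (ε + α * (ε - 1)) := by nlinarith [mul_pos hα (sub_pos.mpr hε), mul_pos hς (mul_pos hα (sub_pos.mpr hε))]
  have hd2 : 0 < ς * (ε - 1) := by nlinarith
  constructor
  · rw [lt_div_iff₀ hd]
    field_simp
    nlinarith [mul_pos hς hα, mul_pos (mul_pos hς hς) hα]
  · rw [div_lt_iff₀ hd]
    have : 1 + (ς + ε) / (ς * (ε - 1)) = (ς * (ε - 1) + (ς + ε)) / (ς * (ε - 1)) := by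
      rw [add_div (ς * (ε - 1)), div_self (ne_of_gt hd2)]
    rw [this, div_mul_eq_mul_div, lt_div_iff₀ hd2]
    nlinarith [mul_pos hα (mul_pos hς hς), mul_pos hς hα]
end

section
/- Let ε > 1, ς > 0, and let MEB(τ) = ε·((τ-1)·ς - 1)/D(τ) with D(τ) = ε + τ·ς - (τ-1)·ε·ς. On the open interval between τ*_W = 1 + 1/ς and τ*_L = 1 + (ς+ε)/(ς·(ε-1)), D(τ) > 0 and MEB(τ) > 0; moreover MEB(τ*_W) = 0 and MEB(τ) → +∞ as τ → τ*_L from the left. -/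
theorem meb_on_tradeoff_interval (ε ς : ℝ) (hε : 1 < ε) (hς : 0 < ς) :
    (∀ τ ∈ Set.Ioo (1 + 1 / ς) (1 + (ς + ε) / (ς * (ε - 1))),
      0 < ε + τ * ς - (τ - 1) * ε * ς ∧
      0 < ε * ((τ - 1) * ς - 1) / (ε + τ * ς - (τ - 1) * ε * ς)) ∧
    ε * (((1 + 1 / ς) - 1) * ς - 1) /
      (ε + (1 + 1 / ς) * ς - ((1 + 1 / ς) - 1) * ε * ς) = 0 ∧
    Filter.Tendsto (fun τ : ℝ => ε * ((τ - 1) * ς - 1) / (ε + τ * ς - (τ - 1) * ε * ς))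
      (nhdsWithin (1 + (ς + ε) / (ς * (ε - 1))) (Set.Iio (1 + (ς + ε) / (ς * (ε - 1)))))
      Filter.atTop := by
  have hς' : ς ≠ 0 := ne_of_gt hς
  have hε1 : (0:ℝ) < ε - 1 := by linarith
  have hden : (0:ℝ) < ς * (ε - 1) := by positivity
  set L := 1 + (ς + ε) / (ς * (ε - 1)) with hL
  have hkey : (L - 1) * (ς * (ε - 1)) = ς + ε := by
    rw [hL]; field_simp; ring
  have hDpos : ∀ τ : ℝ, τ < L → 0 < ε + τ * ς - (τ - 1) * ε * ς := by
    intro τ hτ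
    have h1 : (τ - 1) * (ς * (ε - 1)) < ς + ε := by
      rw [← hkey]
      exact mul_lt_mul_of_pos_right (by linarith) hden
    have h2 : ε + τ * ς - (τ - 1) * ε * ς = (ς + ε) - (τ - 1) * (ς * (ε - 1)) := by
      ring
    linarith
  refine ⟨?_, ?_, ?_⟩
  · rintro τ ⟨hτ1, hτ2⟩
    have hD := hDpos τ hτ2
    refine ⟨hD, div_pos ?_ hD⟩
    have h3 : 1 / ς < τ - 1 := by linarith
    have h4 : 1 < (τ - 1) * ς := by
      rw [div_lt_iff₀ hς] at h3; linarith
    nlinarith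
  · have h0 : ((1 + 1 / ς) - 1) * ς - 1 = 0 := by field_simp; ring
    rw [h0]; simp
  · have hnum : Filter.Tendsto (fun τ : ℝ => ε * ((τ - 1) * ς - 1))
        (nhdsWithin L (Set.Iio L)) (nhds (ε * ((L - 1) * ς - 1))) := by
      exact Filter.Tendsto.mono_left
        ((by continuity : Continuous fun τ : ℝ => ε * ((τ - 1) * ς - 1)).tendsto L)
        nhdsWithin_le_nhds
    have hNL : 0 < ε * ((L - 1) * ς - 1) := by
      have h5 : 1 < (L - 1) * ς := by
        have h6 : (L - 1) * ς = (ς + ε) / (ε - 1) := by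
          field_simp at hkey ⊢; nlinarith [hkey]
        rw [h6, lt_div_iff₀ hε1]; linarith
      nlinarith
    have hDlim : Filter.Tendsto (fun τ : ℝ => ε + τ * ς - (τ - 1) * ε * ς)
        (nhdsWithin L (Set.Iio L)) (nhdsWithin 0 (Set.Ioi 0)) := by
      apply tendsto_nhdsWithin_of_tendsto_nhds_of_eventually_within
      · have hDL : ε + L * ς - (L - 1) * ε * ς = 0 := by linear_combination -hkey
        have hc := (by continuity :
          Continuous fun τ : ℝ => ε + τ * ς - (τ - 1) * ε * ς).tendsto L
        rw [hDL] at hc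
        exact hc.mono_left nhdsWithin_le_nhds
      · filter_upwards [self_mem_nhdsWithin] with τ hτ
        exact hDpos τ hτ
    have hInv : Filter.Tendsto (fun τ : ℝ => (ε + τ * ς - (τ - 1) * ε * ς)⁻¹)
        (nhdsWithin L (Set.Iio L)) Filter.atTop := hDlim.inv_tendsto_nhdsGT_zero
    have := Filter.Tendsto.pos_mul_atTop hNL hnum hInv
    simpa [div_eq_mul_inv] using this
end
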